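/- arXiv:1601.06502 — 3 statements merged into one kernel-verified Lean document; each statement's English description precedes it below -/
import Mathlib

section
/- Let F be a field of characteristic 2, let t ∈ F satisfy t·(t+1)·(t²+t+1) ≠ 0, and set t₁ = t/(t²+t+1), t₂ = (1+t)/(t²+t+1), t₃ = t·(1+t)/(t²+t+1). Let a, b, c ∈ F with c ≠ 0, and for j = 1, 2, 3 set x_j = t_j·c and h_j = b·x_j⁻² + x_j + a. Then h₁ + h₂ + h₃ = c + a. -/
/-- The three trace-test quantities `h_j = b·x_j⁻² + x_j + a` of SWChar2, with
`x_j = t_j·c`, sum to `c + a`. -/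
theorem swchar2_h_sum {F : Type*} [Field F] [CharP F 2] (t a b c : F)
    (ht : t * (t + 1) * (t ^ 2 + t + 1) ≠ 0) (hc : c ≠ 0) :
    let t₁ := t / (t ^ 2 + t + 1)
    let t₂ := (1 + t) / (t ^ 2 + t + 1)
    let t₃ := t * (1 + t) / (t ^ 2 + t + 1)
    let x₁ := t₁ * c
    let x₂ := t₂ * c
    let x₃ := t₃ * c
    (b * (x₁⁻¹) ^ 2 + x₁ + a) + (b * (x₂⁻¹) ^ 2 + x₂ + a) + (b * (x₃⁻¹) ^ 2 + x₃ + a)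
      = c + a := by
  have ht0 : t ≠ 0 := fun h => ht (by simp [h])
  have ht1 : (1 : F) + t ≠ 0 := fun h => ht (by rw [add_comm] at h; simp [h])
  have ht2 : t ^ 2 + t + 1 ≠ 0 := fun h => ht (by simp [h])
  have h2 : (2 : F) = 0 := by exact_mod_cast CharP.cast_eq_zero F 2
  simp only []
  have hE1 : t / (t ^ 2 + t + 1) * c + (1 + t) / (t ^ 2 + t + 1) * c
      + t * (1 + t) / (t ^ 2 + t + 1) * c = c := by
    rw [div_mul_eq_mul_div, div_mul_eq_mul_div, div_mul_eq_mul_div, ← add_div,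
      ← add_div, div_eq_iff ht2]
    linear_combination c * t * h2
  have hE2 : (t / (t ^ 2 + t + 1) * c)⁻¹
      = ((1 + t) / (t ^ 2 + t + 1) * c)⁻¹ + (t * (1 + t) / (t ^ 2 + t + 1) * c)⁻¹ := by
    rw [div_mul_eq_mul_div, inv_div, div_mul_eq_mul_div, inv_div,
      div_mul_eq_mul_div, inv_div]
    rw [div_add_div _ _ (by exact mul_ne_zero ht1 hc) (by
      exact mul_ne_zero (mul_ne_zero ht0 ht1) hc)]
    rw [div_eq_div_iff (mul_ne_zero ht0 hc) (by
      exact mul_ne_zero (mul_ne_zero ht1 hc) (mul_ne_zero (mul_ne_zero ht0 ht1) hc))]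
    ring_nf
  linear_combination hE1
    + b * ((t / (t ^ 2 + t + 1) * c)⁻¹ + ((1 + t) / (t ^ 2 + t + 1) * c)⁻¹
        + (t * (1 + t) / (t ^ 2 + t + 1) * c)⁻¹) * hE2
    + (b * (((1 + t) / (t ^ 2 + t + 1) * c)⁻¹) ^ 2
        + b * ((t * (1 + t) / (t ^ 2 + t + 1) * c)⁻¹) ^ 2
        + b * ((1 + t) / (t ^ 2 + t + 1) * c)⁻¹ * (t * (1 + t) / (t ^ 2 + t + 1) * c)⁻¹
        + a) * h2
end

section
/- Let F be a finite field of characteristic 2 with trace map Tr : F → GF(2) over its prime field, let t ∈ F satisfy t·(t+1)·(t²+t+1) ≠ 0, and set t₁ = t/(t²+t+1), t₂ = (1+t)/(t²+t+1), t₃ = t·(1+t)/(t²+t+1). Let a, b, w ∈ F and suppose c := w² + w + a is nonzero. For j = 1, 2, 3 set x_j = t_j·c and h_j = b·x_j⁻² + x_j + a. Then Tr(h₁) + Tr(h₂) + Tr(h₃) = 0 in GF(2), and consequently there exists j ∈ {1,2,3} with Tr(h_j) = 0. -/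
theorem swchar2_tr_sq {F : Type*} [Field F] [Fintype F] [Algebra (ZMod 2) F] (w : F) :
    Algebra.trace (ZMod 2) F (w ^ 2) = Algebra.trace (ZMod 2) F w := by
  haveI : CharP F 2 := charP_of_injective_algebraMap (algebraMap (ZMod 2) F).injective 2
  exact Algebra.trace_eq_of_algEquiv
    (AlgEquiv.ofRingEquiv (f := frobeniusEquiv F 2)
      (by intro a; simp [frobeniusEquiv_def]; rw [frobenius_def, ← map_pow, ZMod.pow_card])) w

theorem swchar2_aux {F : Type*} [Field F] (t a b c : F) (h2 : (2:F) = 0)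
    (ht0 : t ≠ 0) (ht1 : 1 + t ≠ 0) (htd : t ^ 2 + t + 1 ≠ 0) (hc : c ≠ 0) :
    (b * ((t / (t ^ 2 + t + 1) * c)⁻¹) ^ 2 + t / (t ^ 2 + t + 1) * c + a)
      + (b * (((1 + t) / (t ^ 2 + t + 1) * c)⁻¹) ^ 2 + (1 + t) / (t ^ 2 + t + 1) * c + a)
      + (b * ((t * (1 + t) / (t ^ 2 + t + 1) * c)⁻¹) ^ 2 + t * (1 + t) / (t ^ 2 + t + 1) * c + a)
      = c + a := by
  have hB : t / (t ^ 2 + t + 1) * c + (1 + t) / (t ^ 2 + t + 1) * c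
      + t * (1 + t) / (t ^ 2 + t + 1) * c = c := by
    field_simp
    rw [div_eq_one_iff_eq (by intro h; apply htd; linear_combination h)]
    linear_combination t * h2
  have hA : (t / (t ^ 2 + t + 1) * c)⁻¹ + ((1 + t) / (t ^ 2 + t + 1) * c)⁻¹
      + (t * (1 + t) / (t ^ 2 + t + 1) * c)⁻¹ = 0 := by
    field_simp
    linear_combination (1 + 2*t + 2*t^2 + t^3) * h2
  set s₁ := (t / (t ^ 2 + t + 1) * c)⁻¹
  set s₂ := ((1 + t) / (t ^ 2 + t + 1) * c)⁻¹
  set s₃ := (t * (1 + t) / (t ^ 2 + t + 1) * c)⁻¹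
  linear_combination hB + b*(s₁+s₂+s₃)*hA - b*(s₁*s₂+s₁*s₃+s₂*s₃)*h2 + a*h2

/-- Correctness of SWChar2: the three trace-test quantities have traces summing to 0
in `GF(2)`, hence at least one of them has trace 0. -/
theorem swchar2_trace_test {F : Type*} [Field F] [Fintype F] [Algebra (ZMod 2) F]
    (t a b w : F) (ht : t * (t + 1) * (t ^ 2 + t + 1) ≠ 0)
    (hc : w ^ 2 + w + a ≠ 0) :
    let c := w ^ 2 + w + a
    let t₁ := t / (t ^ 2 + t + 1)
    let t₂ := (1 + t) / (t ^ 2 + t + 1)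
    let t₃ := t * (1 + t) / (t ^ 2 + t + 1)
    let x₁ := t₁ * c
    let x₂ := t₂ * c
    let x₃ := t₃ * c
    let h₁ := b * (x₁⁻¹) ^ 2 + x₁ + a
    let h₂ := b * (x₂⁻¹) ^ 2 + x₂ + a
    let h₃ := b * (x₃⁻¹) ^ 2 + x₃ + a
    Algebra.trace (ZMod 2) F h₁ + Algebra.trace (ZMod 2) F h₂ +
        Algebra.trace (ZMod 2) F h₃ = 0 ∧
      (Algebra.trace (ZMod 2) F h₁ = 0 ∨ Algebra.trace (ZMod 2) F h₂ = 0 ∨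
        Algebra.trace (ZMod 2) F h₃ = 0) := by
  intro c t₁ t₂ t₃ x₁ x₂ x₃ h₁ h₂ h₃
  haveI : CharP F 2 := charP_of_injective_algebraMap (algebraMap (ZMod 2) F).injective 2
  have h2 : (2 : F) = 0 := by exact_mod_cast CharP.cast_eq_zero F 2
  have ht0 : t ≠ 0 := fun h => ht (by simp [h])
  have ht1 : 1 + t ≠ 0 := fun h => ht (by
    rw [show t + 1 = (0:F) from by linear_combination h, mul_zero, zero_mul])
  have htd : t ^ 2 + t + 1 ≠ 0 := fun h => ht (by rw [h, mul_zero])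
  have hsum : h₁ + h₂ + h₃ = w ^ 2 + w := by
    have := swchar2_aux t a b c h2 ht0 ht1 htd hc
    calc h₁ + h₂ + h₃ = c + a := this
      _ = w ^ 2 + w := by show w ^ 2 + w + a + a = w ^ 2 + w; linear_combination a * h2
  have key : Algebra.trace (ZMod 2) F h₁ + Algebra.trace (ZMod 2) F h₂ +
      Algebra.trace (ZMod 2) F h₃ = 0 := by
    rw [← map_add, ← map_add, hsum, map_add, swchar2_tr_sq]
    exact CharTwo.add_self_eq_zero _
  refine ⟨key, ?_⟩
  revert key
  generalize Algebra.trace (ZMod 2) F h₁ = u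
  generalize Algebra.trace (ZMod 2) F h₂ = v
  generalize Algebra.trace (ZMod 2) F h₃ = z
  revert u v z
  decide
end

section
/- Let T be an additive commutative cancellative monoid. Define a relation on T × T by (a₊, a₋) ≈ (b₊, b₋) if and only if a₊ + b₋ = a₋ + b₊; this is an equivalence relation, and the quotient G = (T × T)/≈ with addition ⟦(a₊, a₋)⟧ + ⟦(b₊, b₋)⟧ = ⟦(a₊ + b₊, a₋ + b₋)⟧ and negation −⟦(a₊, a₋)⟧ = ⟦(a₋, a₊)⟧ is an additive commutative group. Moreover, given a type A and an additive monoid homomorphism H : (A →₀ ℕ) → T, the map H' : (A →₀ ℤ) → G defined by H'(M) = ⟦(H(M⁺), H(M⁻))⟧ — where M⁺(a) = max(M(a), 0) and M⁻(a) = max(−M(a), 0), viewed as finitely supported ℕ-valued functions — is an additive group homomorphism: H'(M₁ + M₂) = H'(M₁) + H'(M₂) for all M₁, M₂ : A →₀ ℤ. Finally, the map φ : T → G given by φ(a) = ⟦(a, 0)⟧ is an injective additive monoid homomorphism. -/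
/-- The Grothendieck relation on `T × T`: `(a₊, a₋) ≈ (b₊, b₋)` iff `a₊ + b₋ = a₋ + b₊`. -/
instance grothendieckSetoid (T : Type*) [AddCancelCommMonoid T] : Setoid (T × T) where
  r p q := p.1 + q.2 = p.2 + q.1
  iseqv := by
    constructor
    · intro p
      exact add_comm _ _
    · intro p q h
      rw [add_comm, ← h, add_comm]
    · intro p q s h1 h2
      have key : (p.1 + s.2) + (q.1 + q.2) = (p.2 + s.1) + (q.1 + q.2) := by
        calc (p.1 + s.2) + (q.1 + q.2) = (p.1 + q.2) + (q.1 + s.2) := by abel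
          _ = (p.2 + q.1) + (q.2 + s.1) := by rw [h1, h2]
          _ = (p.2 + s.1) + (q.1 + q.2) := by abel
      exact add_right_cancel key

/-- The Grothendieck group of a cancellative commutative monoid `T`, with positive and
negative parts tracked separately. -/
abbrev GrothendieckQuot (T : Type*) [AddCancelCommMonoid T] :=
  Quotient (grothendieckSetoid T)

instance (T : Type*) [AddCancelCommMonoid T] : Zero (GrothendieckQuot T) :=
  ⟨⟦(0, 0)⟧⟩

instance (T : Type*) [AddCancelCommMonoid T] : Add (GrothendieckQuot T) :=
  ⟨Quotient.map₂ (fun p q => (p.1 + q.1, p.2 + q.2)) (by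
    intro p p' hp q q' hq
    show (p.1 + q.1) + (p'.2 + q'.2) = (p.2 + q.2) + (p'.1 + q'.1)
    calc (p.1 + q.1) + (p'.2 + q'.2) = (p.1 + p'.2) + (q.1 + q'.2) := by abel
      _ = (p.2 + p'.1) + (q.2 + q'.1) := by rw [hp, hq]
      _ = (p.2 + q.2) + (p'.1 + q'.1) := by abel)⟩

instance (T : Type*) [AddCancelCommMonoid T] : Neg (GrothendieckQuot T) :=
  ⟨Quotient.map (fun p => (p.2, p.1)) (by
    intro p q h
    exact h.symm)⟩

instance GrothendieckQuot.addCommGroup (T : Type*) [AddCancelCommMonoid T] :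
    AddCommGroup (GrothendieckQuot T) where
  add := (· + ·)
  zero := 0
  neg := Neg.neg
  nsmul := nsmulRec
  zsmul := zsmulRec
  add_assoc := by
    intro a b c
    induction a using Quotient.ind
    induction b using Quotient.ind
    induction c using Quotient.ind
    apply Quotient.sound
    show _ + _ = _ + _
    abel_nf
    first | ac_rfl | (simp only [zero_add, add_zero] <;> ac_rfl) | (simp <;> ac_rfl)
  zero_add := by
    intro a
    induction a using Quotient.ind
    apply Quotient.sound
    show _ + _ = _ + _
    abel_nf
    first | ac_rfl | (simp only [zero_add, add_zero] <;> ac_rfl) | (simp <;> ac_rfl)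
  add_zero := by
    intro a
    induction a using Quotient.ind
    apply Quotient.sound
    show _ + _ = _ + _
    abel_nf
    first | ac_rfl | (simp only [zero_add, add_zero] <;> ac_rfl) | (simp <;> ac_rfl)
  neg_add_cancel := by
    intro a
    induction a using Quotient.ind
    apply Quotient.sound
    show _ + _ = _ + _
    abel_nf
  add_comm := by
    intro a b
    induction a using Quotient.ind
    induction b using Quotient.ind
    apply Quotient.sound
    show _ + _ = _ + _
    abel_nf

/-- The positive part of an integer-valued finitely supported function, as an
ℕ-valued finitely supported function: `M⁺(a) = max(M(a), 0)`. -/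
noncomputable def Finsupp.posPart {A : Type*} (M : A →₀ ℤ) : A →₀ ℕ :=
  M.mapRange Int.toNat Int.toNat_zero

/-- The extension of a monoid-homomorphic multiset hash `H : (A →₀ ℕ) →+ T` to
integer multiplicities, with values in the Grothendieck group of `T`:
`H'(M) = ⟦(H(M⁺), H(M⁻))⟧`. -/
noncomputable def extendedHash {A T : Type*} [AddCancelCommMonoid T]
    (H : (A →₀ ℕ) →+ T) : (A →₀ ℤ) → GrothendieckQuot T :=
  fun M => ⟦(H M.posPart, H (-M).posPart)⟧

/-- Appendix C: the Grothendieck relation is an equivalence relation; the quotient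
`G = (T × T)/≈` with `⟦p⟧ + ⟦q⟧ = ⟦(p₊ + q₊, p₋ + q₋)⟧` and `-⟦p⟧ = ⟦(p₋, p₊)⟧` is an
additive commutative group (witnessed by the instance above, whose operations act as
stated); any additive monoid homomorphism `H : (A →₀ ℕ) →+ T` extends to a
group-homomorphic multiset hash `H' : (A →₀ ℤ) → G`,
`H'(M) = ⟦(H(M⁺), H(M⁻))⟧`; and `φ(a) = ⟦(a, 0)⟧` is an injective additive monoid
homomorphism embedding `T` into `G`. -/
theorem grothendieck_multiset_hash {A T : Type*} [AddCancelCommMonoid T]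
    (H : (A →₀ ℕ) →+ T) :
    Equivalence (fun p q : T × T => p.1 + q.2 = p.2 + q.1) ∧
    (∀ p q : T × T,
      (⟦p⟧ + ⟦q⟧ : GrothendieckQuot T) = ⟦(p.1 + q.1, p.2 + q.2)⟧) ∧
    (∀ p : T × T, (-⟦p⟧ : GrothendieckQuot T) = ⟦(p.2, p.1)⟧) ∧
    (∀ M₁ M₂ : A →₀ ℤ,
      extendedHash H (M₁ + M₂) = extendedHash H M₁ + extendedHash H M₂) ∧
    Function.Injective (fun a : T => (⟦(a, 0)⟧ : GrothendieckQuot T)) ∧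
    ((⟦((0 : T), (0 : T))⟧ : GrothendieckQuot T) = 0 ∧
      ∀ a b : T, (⟦(a + b, 0)⟧ : GrothendieckQuot T) = ⟦(a, 0)⟧ + ⟦(b, 0)⟧) := by
  refine ⟨(grothendieckSetoid T).iseqv, fun p q => rfl, fun p => rfl, ?_, ?_, rfl, fun a b => ?_⟩
  · intro M₁ M₂
    apply (Quotient.sound _).symm
    show H M₁.posPart + H M₂.posPart + H (-(M₁ + M₂)).posPart
        = H (-M₁).posPart + H (-M₂).posPart + H (M₁ + M₂).posPart
    rw [← map_add, ← map_add, ← map_add, ← map_add]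
    congr 1
    ext a
    simp only [Finsupp.add_apply, Finsupp.posPart, Finsupp.mapRange_apply,
      Finsupp.neg_apply, Finsupp.add_apply]
    omega
  · intro a b h
    have : a + (0 : T) = 0 + b := Quotient.exact h
    simpa using this
  · apply Quotient.sound
    show a + b + (0 + 0) = 0 + (a + b)
    abel
end
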